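/- There exists a constant C > 0 such that for every a ∈ [7/4, 2], the functions ψ⁺_a(x) := (2πa)^{−1/2}·e^{−(x+1)²/(2a)}/(1 + e^{2x/a}) and ψ⁻_a(x) := (2πa)^{−1/2}·e^{−(x+1)²/(2a)}/(1 + e^{−2x/a}) satisfy ∫_ℝ |ψ̂⁺_a(ξ)| dξ ≤ C and ∫_ℝ |ψ̂⁻_a(ξ)| dξ ≤ C, where ĝ(ξ) := ∫_ℝ g(x)e^{ixξ} dx. -/

import Mathlib

open Matrix MeasureTheory Filter
open scoped ComplexOrder

noncomputable section

/-- The space of `d × d` complex matrices. -/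
abbrev Mat (d : ℕ) : Type := Matrix (Fin d) (Fin d) ℂ

/-- The Gibbs state `ρ_β = exp(-βH)/Tr(exp(-βH))`. -/
def gibbs {d : ℕ} (H : Mat d) (β : ℝ) : Mat d :=
  (Matrix.trace (NormedSpace.exp ((-β : ℂ) • H)))⁻¹ • NormedSpace.exp ((-β : ℂ) • H)

/-- The power `ρ_β^s = exp(-sβH)/Tr(exp(-βH))^s`. -/
def gibbsPow {d : ℕ} (H : Mat d) (β s : ℝ) : Mat d :=
  ((Matrix.trace (NormedSpace.exp ((-β : ℂ) • H))) ^ (s : ℂ))⁻¹ •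
    NormedSpace.exp ((-(s * β) : ℂ) • H)

/-- The Hilbert–Schmidt inner product `⟨A,B⟩₂ = Tr(A† B)`. -/
def hsInner {d : ℕ} (A B : Mat d) : ℂ := Matrix.trace (Aᴴ * B)

/-- The KMS inner product `⟨A,B⟩_{ρ_β} = Tr(A† ρ_β^{1/2} B ρ_β^{1/2})`. -/
def kmsInner {d : ℕ} (H : Mat d) (β : ℝ) (A B : Mat d) : ℂ :=
  Matrix.trace (Aᴴ * gibbsPow H β (1/2) * B * gibbsPow H β (1/2))

/-- The trace norm `‖A‖₁ = Tr √(A†A)`. -/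
def traceNorm {d : ℕ} (A : Mat d) : ℝ :=
  ((((Matrix.posSemidef_conjTranspose_mul_self A).1.eigenvectorUnitary : Mat d) *
    Matrix.diagonal (fun i => ((√((Matrix.posSemidef_conjTranspose_mul_self A).1.eigenvalues i) : ℝ) : ℂ)) *
    (star (Matrix.posSemidef_conjTranspose_mul_self A).1.eigenvectorUnitary : Mat d)).trace).re

/-- The operator (spectral) norm of a matrix. -/
def opNorm {d : ℕ} (A : Mat d) : ℝ :=
  ‖Matrix.toEuclideanCLM (𝕜 := ℂ) A‖

/-- The Frobenius / Hilbert–Schmidt norm `‖A‖₂ = √Tr(A†A)`. -/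
def frobNorm {d : ℕ} (A : Mat d) : ℝ :=
  Real.sqrt ((Matrix.trace (Aᴴ * A)).re)

attribute [local instance] Matrix.frobeniusNormedAddCommGroup Matrix.frobeniusNormedSpace

/-- The exponential of a linear endomorphism of matrix space. -/
def endExp {d : ℕ} (L : Mat d →ₗ[ℂ] Mat d) : Mat d →ₗ[ℂ] Mat d :=
  (@NormedSpace.exp _ _ _ (@NonUnitalSeminormedRing.toIsTopologicalRing (Mat d →L[ℂ] Mat d)
    (ContinuousLinearMap.toNormedRing (E := Mat d) (𝕜 := ℂ)).toSeminormedRing.toNonUnitalSeminormedRing)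
    (LinearMap.toContinuousLinearMap L)).toLinearMap

/-- The induced trace norm (1→1 norm) of a linear map on matrices. -/
def oneNorm {d : ℕ} (L : Mat d →ₗ[ℂ] Mat d) : ℝ :=
  ⨆ A : {A : Mat d // traceNorm A = 1}, traceNorm (L A.1)


namespace Stmt14
open MeasureTheory

/-- dominating function -/
def D (x : ℝ) : ℝ := 400 * Real.exp 40 * Real.exp (-(x+1)^2/16)

lemma D_nonneg (x : ℝ) : 0 ≤ D x := by unfold D; positivity

lemma integrable_D : Integrable D := by
  have h : Integrable (fun x : ℝ => Real.exp (-(1/16 : ℝ) * x ^ 2)) :=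
    integrable_exp_neg_mul_sq (by norm_num)
  have h2 := (h.comp_add_right 1).const_mul (400 * Real.exp 40)
  refine h2.congr (Filter.Eventually.of_forall fun x => ?_)
  have e : -(1/16 : ℝ) * (x+1) ^ 2 = -(x+1)^2/16 := by ring
  simp only [e]
  rfl

section
variable (a ε : ℝ)

def g (x : ℝ) : ℝ := Real.exp (-(x+1)^2/(2*a))
def q (x : ℝ) : ℝ := 1 + Real.exp (ε*(2*x/a))
def cc : ℝ := (2*Real.pi*a) ^ (-(1/2) : ℝ)
def r (x : ℝ) : ℝ := cc a * g a x / q a ε x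
def g1 (x : ℝ) : ℝ := (-(x+1)/a) * g a x
def g2 (x : ℝ) : ℝ := ((x+1)^2/a^2 - 1/a) * g a x
def q1 (x : ℝ) : ℝ := (ε*2/a) * Real.exp (ε*(2*x/a))
def q2 (x : ℝ) : ℝ := (ε*2/a)^2 * Real.exp (ε*(2*x/a))
def r1 (x : ℝ) : ℝ := (cc a * g1 a x * q a ε x - cc a * g a x * q1 a ε x) / (q a ε x)^2
def r2 (x : ℝ) : ℝ := cc a * (g2 a x / q a ε x - g a x * q2 a ε x / (q a ε x)^2
   - 2 * (g1 a x * q1 a ε x) / (q a ε x)^2 + 2 * (g a x * (q1 a ε x)^2) / (q a ε x)^3)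

lemma q_pos (x : ℝ) : 0 < q a ε x := by unfold q; positivity

lemma one_le_q (x : ℝ) : 1 ≤ q a ε x :=
  le_add_of_nonneg_right (Real.exp_pos _).le

lemma hasDerivAt_g (ha : 0 < a) (x : ℝ) : HasDerivAt (g a) (g1 a x) x := by
  have h : HasDerivAt (fun x : ℝ => -(x+1)^2/(2*a)) (-(x+1)/a) x := by
    have h2 := (((hasDerivAt_id' x).add_const 1).pow 2).neg.div_const (2*a)
    refine HasDerivAt.congr_deriv h2 ?_
    push_cast
    field_simp
  have h3 := h.exp
  unfold g1 g
  convert h3 using 1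
  ring

lemma hasDerivAt_lin (x : ℝ) : HasDerivAt (fun x : ℝ => ε*(2*x/a)) (ε*2/a) x := by
  have h0 : HasDerivAt (fun x : ℝ => (ε*2/a)*x) (ε*2/a) x := by
    simpa using (hasDerivAt_id' x).const_mul (ε*2/a)
  exact h0.congr_of_eventuallyEq (Filter.Eventually.of_forall fun y => by ring)

lemma hasDerivAt_q (x : ℝ) : HasDerivAt (q a ε) (q1 a ε x) x := by
  have h := ((hasDerivAt_lin a ε x).exp).const_add 1
  unfold q1 q
  refine HasDerivAt.congr_deriv h ?_
  ring

lemma hasDerivAt_g1 (ha : 0 < a) (x : ℝ) : HasDerivAt (g1 a) (g2 a x) x := by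
  have hl : HasDerivAt (fun x : ℝ => -(x+1)/a) (-1/a) x :=
    (((hasDerivAt_id' x).add_const 1).neg).div_const a
  have h := hl.mul (hasDerivAt_g a ha x)
  unfold g2 g1
  refine HasDerivAt.congr_deriv h ?_
  unfold g1
  field_simp
  ring

lemma hasDerivAt_q1 (x : ℝ) : HasDerivAt (q1 a ε) (q2 a ε x) x := by
  have h := HasDerivAt.const_mul (ε*2/a) ((hasDerivAt_lin a ε x).exp)
  unfold q2 q1
  refine HasDerivAt.congr_deriv h ?_
  ring

lemma hasDerivAt_r (ha : 0 < a) (x : ℝ) : HasDerivAt (r a ε) (r1 a ε x) x := by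
  have h := ((hasDerivAt_g a ha x).const_mul (cc a)).div (hasDerivAt_q a ε x)
    (q_pos a ε x).ne'
  unfold r1 r
  refine HasDerivAt.congr_deriv h ?_ <;> ring

lemma hasDerivAt_r1 (ha : 0 < a) (x : ℝ) : HasDerivAt (r1 a ε) (r2 a ε x) x := by
  have hN : HasDerivAt (fun x => cc a * g1 a x * q a ε x - cc a * g a x * q1 a ε x)
      ((cc a * g2 a x * q a ε x + cc a * g1 a x * q1 a ε x)
        - (cc a * g1 a x * q1 a ε x + cc a * g a x * q2 a ε x)) x := by
    have h1 := (((hasDerivAt_g1 a ha x).const_mul (cc a)).mul (hasDerivAt_q a ε x))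
    have h2 := (((hasDerivAt_g a ha x).const_mul (cc a)).mul (hasDerivAt_q1 a ε x))
    exact h1.sub h2
  have hden := (hasDerivAt_q a ε x).pow 2
  have h := hN.div hden (pow_ne_zero 2 (q_pos a ε x).ne')
  unfold r2
  refine HasDerivAt.congr_deriv h ?_
  have hq := (q_pos a ε x).ne'
  simp only [Pi.pow_apply]
  field_simp
  ring

end

section Bounds
variable {a ε : ℝ}

lemma eps_abs (hε : ε = 1 ∨ ε = -1) : |ε| = 1 := by
  rcases hε with rfl | rfl <;> norm_num

lemma cc_pos (ha : 7/4 ≤ a) : 0 < cc a := by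
  apply Real.rpow_pos_of_pos
  nlinarith [Real.pi_gt_three]

lemma cc_le_one (ha : 7/4 ≤ a) : cc a ≤ 1 := by
  apply Real.rpow_le_one_of_one_le_of_nonpos
  · nlinarith [Real.pi_gt_three]
  · norm_num

lemma b1 (ha : 7/4 ≤ a) (ha2 : a ≤ 2) (x : ℝ) : g a x ≤ Real.exp (-(x+1)^2/8) := by
  unfold g
  apply Real.exp_le_exp.mpr
  rw [div_le_div_iff₀ (by linarith) (by norm_num)]
  nlinarith [sq_nonneg (x+1)]

lemma b2 (ha : 7/4 ≤ a) (ha2 : a ≤ 2) (hε : ε = 1 ∨ ε = -1) (x : ℝ) :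
    g a x * Real.exp (ε*(2*x/a)) ≤ Real.exp 40 * Real.exp (-(x+1)^2/8) := by
  have ha0 : (0:ℝ) < a := by linarith
  unfold g
  rw [← Real.exp_add, ← Real.exp_add]
  apply Real.exp_le_exp.mpr
  have h2 : -(x+1)^2/(2*a) ≤ -(x+1)^2/4 := by
    rw [div_le_div_iff₀ (by linarith) (by norm_num)]
    nlinarith [sq_nonneg (x+1)]
  have h3 : ε*(2*x/a) ≤ 2*|x| := by
    have habs : |ε*(2*x/a)| = 2*|x|/a := by
      rw [abs_mul, eps_abs hε, one_mul, abs_div, abs_of_pos ha0, abs_mul]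
      norm_num
    calc ε*(2*x/a) ≤ |ε*(2*x/a)| := le_abs_self _
      _ = 2*|x|/a := habs
      _ ≤ 2*|x| := div_le_self (by positivity) (by linarith)
  have h5 : 2*|x| ≤ 40 + (x+1)^2/8 := by
    rcases abs_cases x with ⟨h,_⟩ | ⟨h,_⟩ <;> nlinarith [sq_nonneg (x-7), sq_nonneg (x+9)]
  linarith

lemma b3 (ha : 7/4 ≤ a) (ha2 : a ≤ 2) (hε : ε = 1 ∨ ε = -1) (x : ℝ) :
    g a x * Real.exp (ε*(2*x/a)) * Real.exp (ε*(2*x/a)) ≤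
      Real.exp 40 * Real.exp (-(x+1)^2/8) := by
  have ha0 : (0:ℝ) < a := by linarith
  unfold g
  rw [← Real.exp_add, ← Real.exp_add, ← Real.exp_add]
  apply Real.exp_le_exp.mpr
  have h2 : -(x+1)^2/(2*a) ≤ -(x+1)^2/4 := by
    rw [div_le_div_iff₀ (by linarith) (by norm_num)]
    nlinarith [sq_nonneg (x+1)]
  have h3 : ε*(2*x/a) ≤ 2*|x| := by
    have habs : |ε*(2*x/a)| = 2*|x|/a := by
      rw [abs_mul, eps_abs hε, one_mul, abs_div, abs_of_pos ha0, abs_mul]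
      norm_num
    calc ε*(2*x/a) ≤ |ε*(2*x/a)| := le_abs_self _
      _ = 2*|x|/a := habs
      _ ≤ 2*|x| := div_le_self (by positivity) (by linarith)
  have h5 : 4*|x| ≤ 40 + (x+1)^2/8 := by
    rcases abs_cases x with ⟨h,_⟩ | ⟨h,_⟩ <;> nlinarith [sq_nonneg (x-15), sq_nonneg (x+17)]
  linarith

/-- the intermediate bound -/
def T (x : ℝ) : ℝ := 20 * Real.exp 40 * ((1+(x+1)^2) * Real.exp (-(x+1)^2/8))

lemma T_le_D (x : ℝ) : T x ≤ D x := by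
  have h := Real.add_one_le_exp ((x+1)^2/16)
  have h2 : (1+(x+1)^2) ≤ 16 * Real.exp ((x+1)^2/16) := by nlinarith
  have hpoly : (1+(x+1)^2) * Real.exp (-(x+1)^2/8) ≤ 16 * Real.exp (-(x+1)^2/16) := by
    calc (1+(x+1)^2) * Real.exp (-(x+1)^2/8)
        ≤ (16 * Real.exp ((x+1)^2/16)) * Real.exp (-(x+1)^2/8) :=
          mul_le_mul_of_nonneg_right h2 (Real.exp_pos _).le
      _ = 16 * Real.exp (-(x+1)^2/16) := by
          rw [mul_assoc, ← Real.exp_add]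
          congr 2
          ring
  unfold T D
  nlinarith [Real.exp_pos (40:ℝ), Real.exp_pos (-(x+1)^2/16),
    mul_le_mul_of_nonneg_left hpoly (by positivity : (0:ℝ) ≤ 20 * Real.exp 40)]

lemma bound_r (ha : 7/4 ≤ a) (ha2 : a ≤ 2) (x : ℝ) : |r a ε x| ≤ D x := by
  have ha0 : (0:ℝ) < a := by linarith
  have hg : 0 < g a x := Real.exp_pos _
  have h1q := one_le_q a ε x
  have hq := q_pos a ε x
  have hcc0 := cc_pos ha
  have hcc1 := cc_le_one ha
  have step : |r a ε x| ≤ g a x := by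
    rw [abs_of_nonneg (by unfold r; positivity)]
    unfold r
    calc cc a * g a x / q a ε x ≤ cc a * g a x := div_le_self (by positivity) h1q
      _ ≤ g a x := by nlinarith
  have hX : Real.exp (-(x+1)^2/8) ≤ Real.exp (-(x+1)^2/16) := by
    apply Real.exp_le_exp.mpr
    rw [div_le_div_iff₀ (by norm_num) (by norm_num)]
    nlinarith [sq_nonneg (x+1)]
  have h40 : (1:ℝ) ≤ Real.exp 40 := Real.one_le_exp (by norm_num)
  calc |r a ε x| ≤ g a x := step
    _ ≤ Real.exp (-(x+1)^2/8) := b1 ha ha2 x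
    _ ≤ Real.exp (-(x+1)^2/16) := hX
    _ ≤ D x := by unfold D; nlinarith [Real.exp_pos (-(x+1)^2/16)]

lemma abs_t_le (t : ℝ) : |t| ≤ 1 + t^2 := by
  nlinarith [sq_nonneg (|t|-1), sq_abs t, abs_nonneg t]

lemma g1_abs (ha : 7/4 ≤ a) (x : ℝ) : |g1 a x| ≤ |x+1| * g a x := by
  have ha0 : (0:ℝ) < a := by linarith
  have hg : 0 < g a x := Real.exp_pos _
  unfold g1
  rw [abs_mul, abs_div, abs_neg, abs_of_pos ha0, abs_of_pos hg]
  apply mul_le_mul_of_nonneg_right _ hg.le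
  exact div_le_self (abs_nonneg _) (by linarith)

lemma q1_abs (ha : 7/4 ≤ a) (hε : ε = 1 ∨ ε = -1) (x : ℝ) :
    |q1 a ε x| ≤ 2 * Real.exp (ε*(2*x/a)) := by
  have ha0 : (0:ℝ) < a := by linarith
  unfold q1
  rw [abs_mul, abs_of_pos (Real.exp_pos _), abs_div, abs_mul, eps_abs hε, abs_of_pos ha0]
  apply mul_le_mul_of_nonneg_right _ (Real.exp_pos _).le
  norm_num
  calc (2:ℝ)/a ≤ 2/1 := by
        apply div_le_div_of_nonneg_left (by norm_num) (by norm_num) (by linarith)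
  _ = 2 := by norm_num

lemma bound_r1 (ha : 7/4 ≤ a) (ha2 : a ≤ 2) (hε : ε = 1 ∨ ε = -1) (x : ℝ) :
    |r1 a ε x| ≤ D x := by
  have ha0 : (0:ℝ) < a := by linarith
  have hg : 0 < g a x := Real.exp_pos _
  have h1q := one_le_q a ε x
  have hq := q_pos a ε x
  have hcc0 := cc_pos ha
  have hcc1 := cc_le_one ha
  have hX : 0 < Real.exp (-(x+1)^2/8) := Real.exp_pos _
  have h40 : (1:ℝ) ≤ Real.exp 40 := Real.one_le_exp (by norm_num)
  have hM : |cc a * g1 a x * q a ε x - cc a * g a x * q1 a ε x| ≤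
      (|g1 a x| + g a x * |q1 a ε x|) * (q a ε x)^2 := by
    have h := abs_sub (cc a * g1 a x * q a ε x) (cc a * g a x * q1 a ε x)
    rw [abs_mul, abs_mul, abs_mul, abs_mul, abs_of_pos hcc0, abs_of_pos hq,
      abs_of_pos hg] at h
    have e1 : cc a * q a ε x ≤ q a ε x^2 := by nlinarith
    have e2 : cc a ≤ q a ε x^2 := by nlinarith
    nlinarith [mul_le_mul_of_nonneg_left e1 (abs_nonneg (g1 a x)),
      mul_le_mul_of_nonneg_left e2 (mul_nonneg hg.le (abs_nonneg (q1 a ε x)))]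
  have step : |r1 a ε x| ≤ |g1 a x| + g a x * |q1 a ε x| := by
    unfold r1
    rw [abs_div, abs_of_pos (pow_pos hq 2), div_le_iff₀ (pow_pos hq 2)]
    exact hM
  have hb2 := b2 ha ha2 hε x
  have hg1 := g1_abs ha x
  have hq1 := q1_abs ha hε x
  have habs := abs_t_le (x+1)
  have hgX := b1 ha ha2 x
  calc |r1 a ε x| ≤ |g1 a x| + g a x * |q1 a ε x| := step
    _ ≤ |x+1| * g a x + g a x * (2 * Real.exp (ε*(2*x/a))) := by
        have := mul_le_mul_of_nonneg_left hq1 hg.le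
        linarith
    _ ≤ T x := by
        unfold T
        have s1 : |x+1| * g a x ≤ (1+(x+1)^2) * Real.exp (-(x+1)^2/8) := by
          calc |x+1| * g a x ≤ |x+1| * Real.exp (-(x+1)^2/8) :=
                mul_le_mul_of_nonneg_left hgX (abs_nonneg _)
            _ ≤ (1+(x+1)^2) * Real.exp (-(x+1)^2/8) :=
                mul_le_mul_of_nonneg_right habs hX.le
        have s2 : g a x * (2 * Real.exp (ε*(2*x/a))) ≤
            2 * (Real.exp 40 * Real.exp (-(x+1)^2/8)) := by nlinarith
        have hMpos : (0:ℝ) ≤ (1+(x+1)^2) * Real.exp (-(x+1)^2/8) := by positivity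
        have s3 : (1+(x+1)^2) * Real.exp (-(x+1)^2/8) ≤
            Real.exp 40 * ((1+(x+1)^2) * Real.exp (-(x+1)^2/8)) :=
          le_mul_of_one_le_left hMpos h40
        have s4 : Real.exp 40 * Real.exp (-(x+1)^2/8) ≤
            Real.exp 40 * ((1+(x+1)^2) * Real.exp (-(x+1)^2/8)) := by
          nlinarith [sq_nonneg (x+1), Real.exp_pos (40:ℝ)]
        linarith
    _ ≤ D x := T_le_D x

lemma g2_abs (ha : 7/4 ≤ a) (x : ℝ) : |g2 a x| ≤ (1+(x+1)^2) * g a x := by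
  have ha0 : (0:ℝ) < a := by linarith
  have hg : 0 < g a x := Real.exp_pos _
  unfold g2
  rw [abs_mul, abs_of_pos hg]
  apply mul_le_mul_of_nonneg_right _ hg.le
  have h1 : |(x+1)^2/a^2 - 1/a| ≤ (x+1)^2/a^2 + 1/a := by
    have p1 : 0 ≤ (x+1)^2/a^2 := div_nonneg (sq_nonneg _) (sq_nonneg _)
    have p2 : 0 < 1/a := div_pos one_pos ha0
    exact abs_le.mpr ⟨by linarith, by linarith⟩
  have h2 : (x+1)^2/a^2 ≤ (x+1)^2 := by
    apply div_le_self (sq_nonneg _)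
    nlinarith
  have h3 : 1/a ≤ 1 := by
    rw [div_le_one ha0]; linarith
  linarith

lemma q2_le (ha : 7/4 ≤ a) (hε : ε = 1 ∨ ε = -1) (x : ℝ) :
    q2 a ε x ≤ 4 * Real.exp (ε*(2*x/a)) := by
  have ha0 : (0:ℝ) < a := by linarith
  have he2 : ε^2 = 1 := by rcases hε with rfl | rfl <;> norm_num
  unfold q2
  apply mul_le_mul_of_nonneg_right _ (Real.exp_pos _).le
  have heq : (ε*2/a)^2 = 4/a^2 := by
    field_simp
    nlinarith [he2]
  rw [heq]
  calc (4:ℝ)/a^2 ≤ 4/1 := by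
        apply div_le_div_of_nonneg_left (by norm_num) (by norm_num) (by nlinarith)
  _ = 4 := by norm_num

lemma q2_nonneg (x : ℝ) : 0 ≤ q2 a ε x :=
  mul_nonneg (sq_nonneg _) (Real.exp_pos _).le

set_option maxHeartbeats 1000000 in
lemma bound_r2 (ha : 7/4 ≤ a) (ha2 : a ≤ 2) (hε : ε = 1 ∨ ε = -1) (x : ℝ) :
    |r2 a ε x| ≤ D x := by
  have ha0 : (0:ℝ) < a := by linarith
  have hg : 0 < g a x := Real.exp_pos _
  have h1q := one_le_q a ε x
  have hq := q_pos a ε x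
  have hq2 : (1:ℝ) ≤ (q a ε x)^2 := by nlinarith
  have hq3 : (1:ℝ) ≤ (q a ε x)^3 := by nlinarith
  have hcc0 := cc_pos ha
  have hcc1 := cc_le_one ha
  have hX : 0 < Real.exp (-(x+1)^2/8) := Real.exp_pos _
  have h40 : (1:ℝ) ≤ Real.exp 40 := Real.one_le_exp (by norm_num)
  have he : 0 < Real.exp (ε*(2*x/a)) := Real.exp_pos _
  have t1 : |g2 a x / q a ε x| ≤ (1+(x+1)^2) * Real.exp (-(x+1)^2/8) := by
    rw [abs_div, abs_of_pos hq]
    calc |g2 a x| / q a ε x ≤ |g2 a x| := div_le_self (abs_nonneg _) h1q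
      _ ≤ (1+(x+1)^2) * g a x := g2_abs ha x
      _ ≤ (1+(x+1)^2) * Real.exp (-(x+1)^2/8) :=
          mul_le_mul_of_nonneg_left (b1 ha ha2 x) (by positivity)
  have t2 : |g a x * q2 a ε x / (q a ε x)^2| ≤
      4 * (Real.exp 40 * Real.exp (-(x+1)^2/8)) := by
    rw [abs_div, abs_of_pos (pow_pos hq 2), abs_mul, abs_of_pos hg,
      abs_of_nonneg (q2_nonneg x)]
    calc g a x * q2 a ε x / (q a ε x)^2 ≤ g a x * q2 a ε x :=
          div_le_self (mul_nonneg hg.le (q2_nonneg x)) hq2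
      _ ≤ g a x * (4 * Real.exp (ε*(2*x/a))) :=
          mul_le_mul_of_nonneg_left (q2_le ha hε x) hg.le
      _ = 4 * (g a x * Real.exp (ε*(2*x/a))) := by ring
      _ ≤ 4 * (Real.exp 40 * Real.exp (-(x+1)^2/8)) := by
          nlinarith [b2 ha ha2 hε x]
  have t3 : |2 * (g1 a x * q1 a ε x) / (q a ε x)^2| ≤
      4 * ((1+(x+1)^2) * (Real.exp 40 * Real.exp (-(x+1)^2/8))) := by
    rw [abs_div, abs_of_pos (pow_pos hq 2), abs_mul, abs_mul]
    have hnn : (0:ℝ) ≤ |(2:ℝ)| * (|g1 a x| * |q1 a ε x|) :=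
      mul_nonneg (abs_nonneg _) (mul_nonneg (abs_nonneg _) (abs_nonneg _))
    calc |(2:ℝ)| * (|g1 a x| * |q1 a ε x|) / (q a ε x)^2
        ≤ |(2:ℝ)| * (|g1 a x| * |q1 a ε x|) := div_le_self hnn hq2
      _ = 2 * (|g1 a x| * |q1 a ε x|) := by norm_num
      _ ≤ 2 * ((|x+1| * g a x) * (2 * Real.exp (ε*(2*x/a)))) := by
          have := mul_le_mul (g1_abs ha x) (q1_abs ha hε x) (abs_nonneg _)
            (mul_nonneg (abs_nonneg _) hg.le)
          linarith
      _ = 4 * (|x+1| * (g a x * Real.exp (ε*(2*x/a)))) := by ring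
      _ ≤ 4 * ((1+(x+1)^2) * (Real.exp 40 * Real.exp (-(x+1)^2/8))) := by
          have h1 := b2 ha ha2 hε x
          have h2 := abs_t_le (x+1)
          have s1 : |x+1| * (g a x * Real.exp (ε*(2*x/a))) ≤
              |x+1| * (Real.exp 40 * Real.exp (-(x+1)^2/8)) :=
            mul_le_mul_of_nonneg_left h1 (abs_nonneg _)
          have s2 : |x+1| * (Real.exp 40 * Real.exp (-(x+1)^2/8)) ≤
              (1+(x+1)^2) * (Real.exp 40 * Real.exp (-(x+1)^2/8)) :=
            mul_le_mul_of_nonneg_right h2 (by positivity)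
          linarith
  have t4 : |2 * (g a x * (q1 a ε x)^2) / (q a ε x)^3| ≤
      8 * (Real.exp 40 * Real.exp (-(x+1)^2/8)) := by
    rw [abs_div, abs_of_pos (pow_pos hq 3), abs_mul, abs_mul,
      abs_of_pos hg, abs_of_nonneg (sq_nonneg (q1 a ε x))]
    have hnn : (0:ℝ) ≤ |(2:ℝ)| * (g a x * (q1 a ε x)^2) :=
      mul_nonneg (abs_nonneg _) (mul_nonneg hg.le (sq_nonneg _))
    have hsq : (q1 a ε x)^2 ≤ 4 * (Real.exp (ε*(2*x/a)) * Real.exp (ε*(2*x/a))) := by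
      have h := q1_abs ha hε x
      nlinarith [abs_nonneg (q1 a ε x), sq_abs (q1 a ε x)]
    calc |(2:ℝ)| * (g a x * (q1 a ε x)^2) / (q a ε x)^3
        ≤ |(2:ℝ)| * (g a x * (q1 a ε x)^2) := div_le_self hnn hq3
      _ = 2 * (g a x * (q1 a ε x)^2) := by norm_num
      _ ≤ 2 * (g a x * (4 * (Real.exp (ε*(2*x/a)) * Real.exp (ε*(2*x/a))))) := by
          nlinarith [hsq, hg]
      _ = 8 * (g a x * Real.exp (ε*(2*x/a)) * Real.exp (ε*(2*x/a))) := by ring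
      _ ≤ 8 * (Real.exp 40 * Real.exp (-(x+1)^2/8)) := by
          nlinarith [b3 ha ha2 hε x]
  have habs4 : |r2 a ε x| ≤ |g2 a x / q a ε x| + |g a x * q2 a ε x / (q a ε x)^2|
      + |2 * (g1 a x * q1 a ε x) / (q a ε x)^2|
      + |2 * (g a x * (q1 a ε x)^2) / (q a ε x)^3| := by
    unfold r2
    rw [abs_mul, abs_of_pos hcc0]
    set A := g2 a x / q a ε x with hA
    set B := g a x * q2 a ε x / (q a ε x)^2 with hB
    set C := 2 * (g1 a x * q1 a ε x) / (q a ε x)^2 with hC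
    set E := 2 * (g a x * (q1 a ε x)^2) / (q a ε x)^3 with hE
    have k2 := abs_add_le (A - B - C) E
    have k3 := abs_sub (A - B) C
    have k4 := abs_sub A B
    have k5 : cc a * |A - B - C + E| ≤ |A - B - C + E| :=
      mul_le_of_le_one_left (abs_nonneg _) hcc1
    linarith
  have hMpos : (0:ℝ) ≤ (1+(x+1)^2) * Real.exp (-(x+1)^2/8) := by positivity
  have sXM : Real.exp (-(x+1)^2/8) ≤ (1+(x+1)^2) * Real.exp (-(x+1)^2/8) :=
    le_mul_of_one_le_left hX.le (by nlinarith [sq_nonneg (x+1)])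
  have sMe : (1+(x+1)^2) * Real.exp (-(x+1)^2/8) ≤
      Real.exp 40 * ((1+(x+1)^2) * Real.exp (-(x+1)^2/8)) :=
    le_mul_of_one_le_left hMpos h40
  have sXe : Real.exp 40 * Real.exp (-(x+1)^2/8) ≤
      Real.exp 40 * ((1+(x+1)^2) * Real.exp (-(x+1)^2/8)) :=
    mul_le_mul_of_nonneg_left sXM (Real.exp_pos _).le
  calc |r2 a ε x| ≤ _ := habs4
    _ ≤ T x := by unfold T; linarith
    _ ≤ D x := T_le_D x

end Bounds

section Main
open FourierTransform

variable {a ε : ℝ}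

/-- complex version of the kernel -/
def rc (a ε : ℝ) (x : ℝ) : ℂ := (r a ε x : ℂ)

lemma cont_r2 (ha0 : 0 < a) : Continuous (r2 a ε) := by
  have hqne : ∀ x, q a ε x ≠ 0 := fun x => (q_pos a ε x).ne'
  have cq : Continuous (q a ε) := by unfold q; fun_prop
  have cg : Continuous (g a) := by unfold g; fun_prop
  have cg1 : Continuous (g1 a) := by unfold g1 g; fun_prop
  have cg2 : Continuous (g2 a) := by unfold g2 g; fun_prop
  have cq1 : Continuous (q1 a ε) := by unfold q1; fun_prop
  have cq2 : Continuous (q2 a ε) := by unfold q2; fun_prop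
  unfold r2
  exact continuous_const.mul
    ((((cg2.div cq hqne).sub
      ((cg.mul cq2).div (cq.pow 2) fun x => pow_ne_zero 2 (hqne x))).sub
      ((continuous_const.mul (cg1.mul cq1)).div (cq.pow 2) fun x => pow_ne_zero 2 (hqne x))).add
      ((continuous_const.mul (cg.mul ((cq1.pow 2)))).div (cq.pow 3) fun x => pow_ne_zero 3 (hqne x)))

lemma int_r (ha : 7/4 ≤ a) (ha2 : a ≤ 2) : MeasureTheory.Integrable (r a ε) := by
  have ha0 : (0:ℝ) < a := by linarith
  have cont : Continuous (r a ε) := by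
    rw [continuous_iff_continuousAt]
    exact fun x => (hasDerivAt_r a ε ha0 x).continuousAt
  exact integrable_D.mono' cont.aestronglyMeasurable
    (Filter.Eventually.of_forall fun x => by
      rw [Real.norm_eq_abs]; exact bound_r ha ha2 x)

lemma int_r1 (ha : 7/4 ≤ a) (ha2 : a ≤ 2) (hε : ε = 1 ∨ ε = -1) :
    MeasureTheory.Integrable (r1 a ε) := by
  have ha0 : (0:ℝ) < a := by linarith
  have cont : Continuous (r1 a ε) := by
    rw [continuous_iff_continuousAt]
    exact fun x => (hasDerivAt_r1 a ε ha0 x).continuousAt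
  exact integrable_D.mono' cont.aestronglyMeasurable
    (Filter.Eventually.of_forall fun x => by
      rw [Real.norm_eq_abs]; exact bound_r1 ha ha2 hε x)

lemma int_r2 (ha : 7/4 ≤ a) (ha2 : a ≤ 2) (hε : ε = 1 ∨ ε = -1) :
    MeasureTheory.Integrable (r2 a ε) := by
  have ha0 : (0:ℝ) < a := by linarith
  exact integrable_D.mono' (cont_r2 ha0).aestronglyMeasurable
    (Filter.Eventually.of_forall fun x => by
      rw [Real.norm_eq_abs]; exact bound_r2 ha ha2 hε x)

lemma hasDerivAt_rc (ha0 : 0 < a) (x : ℝ) :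
    HasDerivAt (rc a ε) ((r1 a ε x : ℂ)) x :=
  (hasDerivAt_r a ε ha0 x).ofReal_comp

lemma deriv_rc (ha0 : 0 < a) :
    deriv (rc a ε) = fun x => (r1 a ε x : ℂ) :=
  funext fun x => (hasDerivAt_rc ha0 x).deriv

lemma deriv2_rc (ha0 : 0 < a) :
    deriv (deriv (rc a ε)) = fun x => (r2 a ε x : ℂ) := by
  rw [deriv_rc ha0]
  exact funext fun x => ((hasDerivAt_r1 a ε ha0 x).ofReal_comp).deriv

lemma key_FT (ha : 7/4 ≤ a) (ha2 : a ≤ 2) (hε : ε = 1 ∨ ε = -1) (v : ℝ) :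
    𝓕 (deriv (deriv (rc a ε))) v
      = (2 * (Real.pi:ℂ) * Complex.I * (v:ℂ)) •
          ((2 * (Real.pi:ℂ) * Complex.I * (v:ℂ)) • 𝓕 (rc a ε) v) := by
  have ha0 : (0:ℝ) < a := by linarith
  have Irc : MeasureTheory.Integrable (rc a ε) := (int_r ha ha2).ofReal (𝕜 := ℂ)
  have Irc1 : MeasureTheory.Integrable (deriv (rc a ε)) := by
    rw [deriv_rc ha0]; exact (int_r1 ha ha2 hε).ofReal (𝕜 := ℂ)
  have Irc2 : MeasureTheory.Integrable (deriv (deriv (rc a ε))) := by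
    rw [deriv2_rc ha0]; exact (int_r2 ha ha2 hε).ofReal (𝕜 := ℂ)
  have diff0 : Differentiable ℝ (rc a ε) := fun x => (hasDerivAt_rc ha0 x).differentiableAt
  have diff1 : Differentiable ℝ (deriv (rc a ε)) := by
    rw [deriv_rc ha0]
    exact fun x => ((hasDerivAt_r1 a ε ha0 x).ofReal_comp).differentiableAt
  have h1 := Real.fourier_deriv Irc diff0 Irc1
  have h2 := Real.fourier_deriv Irc1 diff1 Irc2
  calc 𝓕 (deriv (deriv (rc a ε))) v
      = (2 * (Real.pi:ℂ) * Complex.I * (v:ℂ)) • 𝓕 (deriv (rc a ε)) v :=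
        congrFun h2 v
    _ = _ := by rw [congrFun h1 v]

lemma phi_eq (a ε : ℝ) (ξ : ℝ) :
    (∫ x : ℝ, (r a ε x : ℂ) * Complex.exp (Complex.I * x * ξ))
      = 𝓕 (rc a ε) (-ξ/(2*Real.pi)) := by
  rw [Real.fourier_real_eq_integral_exp_smul]
  refine MeasureTheory.integral_congr_ae (Filter.Eventually.of_forall fun x => ?_)
  have hπ : Real.pi ≠ 0 := Real.pi_ne_zero
  have harg : -2 * Real.pi * x * (-ξ/(2*Real.pi)) = x * ξ := by
    field_simp
  beta_reduce
  rw [harg, smul_eq_mul]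
  unfold rc
  rw [mul_comm]
  congr 1
  push_cast
  ring

lemma norm_rc (x : ℝ) : ‖rc a ε x‖ = |r a ε x| := by
  unfold rc
  rw [Complex.norm_real, Real.norm_eq_abs]

lemma main (a ε : ℝ) (ha : 7/4 ≤ a) (ha2 : a ≤ 2) (hε : ε = 1 ∨ ε = -1) :
    (∫ ξ : ℝ, ‖∫ x : ℝ, (r a ε x : ℂ) * Complex.exp (Complex.I * x * ξ)‖)
      ≤ 2 * (∫ x : ℝ, D x) * Real.pi := by
  have ha0 : (0:ℝ) < a := by linarith
  set B := ∫ x : ℝ, D x with hB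
  have hB0 : 0 ≤ B := MeasureTheory.integral_nonneg D_nonneg
  have hFTnorm : ∀ v : ℝ, ‖𝓕 (rc a ε) v‖ ≤ B := by
    intro v
    calc ‖𝓕 (rc a ε) v‖ ≤ ∫ x : ℝ, ‖rc a ε x‖ :=
          VectorFourier.norm_fourierIntegral_le_integral_norm _ _ _ _ _
      _ ≤ B := by
          apply MeasureTheory.integral_mono_of_nonneg
            (Filter.Eventually.of_forall fun x => norm_nonneg _) integrable_D
            (Filter.Eventually.of_forall fun x => ?_)
          beta_reduce
          rw [norm_rc]
          exact bound_r ha ha2 x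
  have hFT2norm : ∀ v : ℝ, ‖𝓕 (deriv (deriv (rc a ε))) v‖ ≤ B := by
    intro v
    calc ‖𝓕 (deriv (deriv (rc a ε))) v‖
        ≤ ∫ x : ℝ, ‖deriv (deriv (rc a ε)) x‖ :=
          VectorFourier.norm_fourierIntegral_le_integral_norm _ _ _ _ _
      _ ≤ B := by
          apply MeasureTheory.integral_mono_of_nonneg
            (Filter.Eventually.of_forall fun x => norm_nonneg _) integrable_D
            (Filter.Eventually.of_forall fun x => ?_)
          beta_reduce
          rw [deriv2_rc ha0]
          beta_reduce
          rw [Complex.norm_real, Real.norm_eq_abs]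
          exact bound_r2 ha ha2 hε x
  have hbound : ∀ ξ : ℝ, ‖∫ x : ℝ, (r a ε x : ℂ) * Complex.exp (Complex.I * x * ξ)‖
      ≤ (2*B) * (1+ξ^2)⁻¹ := by
    intro ξ
    have hpos : (0:ℝ) < 1 + ξ^2 := by positivity
    have h1 : ‖∫ x : ℝ, (r a ε x : ℂ) * Complex.exp (Complex.I * x * ξ)‖ ≤ B := by
      rw [phi_eq]
      exact hFTnorm _
    have h2 : ξ^2 * ‖∫ x : ℝ, (r a ε x : ℂ) * Complex.exp (Complex.I * x * ξ)‖ ≤ B := by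
      rw [phi_eq]
      set v : ℝ := -ξ/(2*Real.pi) with hv
      have hk := key_FT ha ha2 hε v
      have hc : ‖(2 * (Real.pi:ℂ) * Complex.I * (v:ℂ))‖ = |ξ| := by
        simp only [norm_mul, Complex.norm_real, Complex.norm_I, Real.norm_eq_abs]
        rw [hv]
        rw [abs_div, abs_neg, abs_mul]
        rw [abs_of_pos Real.pi_pos, abs_of_pos (by norm_num : (0:ℝ) < 2)]
        have h2π : (0:ℝ) < 2 * Real.pi := by positivity
        field_simp
        norm_num [mul_comm]
      have hn : ‖𝓕 (deriv (deriv (rc a ε))) v‖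
          = ξ^2 * ‖𝓕 (rc a ε) v‖ := by
        rw [hk, norm_smul, norm_smul, hc]
        rw [← mul_assoc, ← sq_abs ξ]
        ring
      rw [← hn]
      exact hFT2norm v
    have h3 : ‖∫ x : ℝ, (r a ε x : ℂ) * Complex.exp (Complex.I * x * ξ)‖ * (1+ξ^2) ≤ 2*B := by
      nlinarith
    calc ‖∫ x : ℝ, (r a ε x : ℂ) * Complex.exp (Complex.I * x * ξ)‖
        = (‖∫ x : ℝ, (r a ε x : ℂ) * Complex.exp (Complex.I * x * ξ)‖ * (1+ξ^2)) * (1+ξ^2)⁻¹ := by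
          rw [mul_assoc, mul_inv_cancel₀ hpos.ne', mul_one]
      _ ≤ (2*B) * (1+ξ^2)⁻¹ :=
          mul_le_mul_of_nonneg_right h3 (inv_nonneg.mpr hpos.le)
  calc (∫ ξ : ℝ, ‖∫ x : ℝ, (r a ε x : ℂ) * Complex.exp (Complex.I * x * ξ)‖)
      ≤ ∫ ξ : ℝ, (2*B) * (1+ξ^2)⁻¹ :=
        MeasureTheory.integral_mono_of_nonneg
          (Filter.Eventually.of_forall fun ξ => norm_nonneg _)
          (integrable_inv_one_add_sq.const_mul (2*B))
          (Filter.Eventually.of_forall hbound)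
    _ = (2*B) * ∫ ξ : ℝ, (1+ξ^2)⁻¹ := MeasureTheory.integral_const_mul _ _
    _ = 2 * B * Real.pi := by rw [integral_univ_inv_one_add_sq]

end Main

end Stmt14


/-- uniform `L¹` bounds on the Fourier transforms of the kernels
`ψ±_a(x) = (2πa)^{-1/2} e^{-(x+1)²/(2a)} / (1 + e^{±2x/a})` for `a ∈ [7/4, 2]`. -/
theorem stmt_14 :
    ∃ C : ℝ, 0 < C ∧ ∀ a : ℝ, a ∈ Set.Icc (7/4 : ℝ) 2 →
      (∫ ξ : ℝ, ‖∫ x : ℝ,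
          (((2 * Real.pi * a) ^ (-(1/2) : ℝ) * Real.exp (-(x + 1) ^ 2 / (2 * a)) /
            (1 + Real.exp (2 * x / a)) : ℝ) : ℂ) * Complex.exp (Complex.I * x * ξ)‖) ≤ C ∧
      (∫ ξ : ℝ, ‖∫ x : ℝ,
          (((2 * Real.pi * a) ^ (-(1/2) : ℝ) * Real.exp (-(x + 1) ^ 2 / (2 * a)) /
            (1 + Real.exp (-(2 * x / a))) : ℝ) : ℂ) * Complex.exp (Complex.I * x * ξ)‖) ≤ C := by
  have hB0 : 0 ≤ ∫ x : ℝ, Stmt14.D x := MeasureTheory.integral_nonneg Stmt14.D_nonneg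
  refine ⟨2 * (∫ x : ℝ, Stmt14.D x) * Real.pi + 1, ?_, ?_⟩
  · nlinarith [Real.pi_pos]
  · intro a ha
    obtain ⟨ha1, ha2⟩ := ha
    have key : ∀ ε : ℝ, ε = 1 ∨ ε = -1 →
        (∫ ξ : ℝ, ‖∫ x : ℝ, (Stmt14.r a ε x : ℂ) * Complex.exp (Complex.I * x * ξ)‖)
          ≤ 2 * (∫ x : ℝ, Stmt14.D x) * Real.pi + 1 := by
      intro ε hε
      have h := Stmt14.main a ε ha1 ha2 hε
      linarith
    constructor
    · refine le_trans (le_of_eq ?_) (key 1 (Or.inl rfl))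
      refine MeasureTheory.integral_congr_ae (Filter.Eventually.of_forall fun ξ => ?_)
      beta_reduce
      congr 1
      refine MeasureTheory.integral_congr_ae (Filter.Eventually.of_forall fun x => ?_)
      beta_reduce
      norm_num [Stmt14.r, Stmt14.cc, Stmt14.g, Stmt14.q]
    · refine le_trans (le_of_eq ?_) (key (-1) (Or.inr rfl))
      refine MeasureTheory.integral_congr_ae (Filter.Eventually.of_forall fun ξ => ?_)
      beta_reduce
      congr 1
      refine MeasureTheory.integral_congr_ae (Filter.Eventually.of_forall fun x => ?_)
      beta_reduce
      norm_num [Stmt14.r, Stmt14.cc, Stmt14.g, Stmt14.q]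

end
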